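/- arXiv:1007.3028 — 3 statements merged into one kernel-verified Lean document; each statement's English description precedes it below -/
import Mathlib

section
/- Let A and B be complex symmetric 4×4 matrices, each of rank exactly 2, such that ker A ∩ ker B = {0}. Then for all nonzero complex numbers s and t the matrix sA + tB is invertible (has rank 4). -/
open Matrix

lemma dot_ker_of_symm {A : Matrix (Fin 4) (Fin 4) ℂ} (hA : A.IsSymm)
    {x u : Fin 4 → ℂ} (hu : A.mulVec u = 0) : (A.mulVec x) ⬝ᵥ u = 0 := by
  rw [dotProduct_comm, dotProduct_mulVec, ← Matrix.mulVec_transpose, hA.eq, hu,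
    zero_dotProduct]

/-- If `A` and `B` are complex symmetric `4×4` matrices of rank exactly `2` with trivial
common kernel, then `sA + tB` is invertible (of rank `4`) for all nonzero `s, t ∈ ℂ`. -/
theorem smul_add_smul_isUnit_of_rank_two_of_disjoint_ker
    (A B : Matrix (Fin 4) (Fin 4) ℂ) (hA : A.IsSymm) (hB : B.IsSymm)
    (hrA : A.rank = 2) (hrB : B.rank = 2)
    (hker : ∀ x : Fin 4 → ℂ, A.mulVec x = 0 → B.mulVec x = 0 → x = 0)
    (s t : ℂ) (hs : s ≠ 0) (ht : t ≠ 0) :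
    IsUnit (s • A + t • B) ∧ (s • A + t • B).rank = 4 := by
  set M := s • A + t • B with hM
  -- kernels as submodules
  set KA := LinearMap.ker A.mulVecLin with hKA
  set KB := LinearMap.ker B.mulVecLin with hKB
  have hfin : ∀ (C : Matrix (Fin 4) (Fin 4) ℂ), C.rank = 2 →
      Module.finrank ℂ (LinearMap.ker C.mulVecLin) = 2 := by
    intro C hC
    have h := LinearMap.finrank_range_add_finrank_ker C.mulVecLin
    rw [show Module.finrank ℂ (LinearMap.range C.mulVecLin) = C.rank from rfl, hC,
      Module.finrank_fintype_fun_eq_card, Fintype.card_fin] at h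
    simpa using by omega
  have hKAr : Module.finrank ℂ KA = 2 := hfin A hrA
  have hKBr : Module.finrank ℂ KB = 2 := hfin B hrB
  have hinf : KA ⊓ KB = ⊥ := by
    rw [Submodule.eq_bot_iff]
    rintro x ⟨hx1, hx2⟩
    exact hker x hx1 hx2
  have hsup : KA ⊔ KB = ⊤ := by
    apply Submodule.eq_top_of_finrank_eq
    have h := Submodule.finrank_sup_add_finrank_inf_eq KA KB
    rw [hinf] at h
    simp only [finrank_bot, add_zero, hKAr, hKBr] at h
    simp [h]
  -- injectivity of M
  have hinj : ∀ x : Fin 4 → ℂ, M.mulVec x = 0 → x = 0 := by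
    intro x hx
    have hx' : s • A.mulVec x + t • B.mulVec x = 0 := by
      simpa [hM, add_mulVec, smul_mulVec] using hx
    have hAx : A.mulVec x = 0 := by
      have hdot : ∀ z : Fin 4 → ℂ, (A.mulVec x) ⬝ᵥ z = 0 := by
        intro z
        have hz : z ∈ KA ⊔ KB := hsup ▸ Submodule.mem_top
        obtain ⟨u, hu, w, hw, rfl⟩ := Submodule.mem_sup.mp hz
        have h1 : (A.mulVec x) ⬝ᵥ u = 0 := dot_ker_of_symm hA hu
        have h2 : (A.mulVec x) ⬝ᵥ w = 0 := by
          have hsc : s * ((A.mulVec x) ⬝ᵥ w) = 0 := by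
            have hAB : s • A.mulVec x = -(t • B.mulVec x) :=
              eq_neg_of_add_eq_zero_left hx'
            calc s * ((A.mulVec x) ⬝ᵥ w) = (s • A.mulVec x) ⬝ᵥ w := by
                  rw [smul_dotProduct]; rfl
              _ = (-(t • B.mulVec x)) ⬝ᵥ w := by rw [hAB]
              _ = -(t * ((B.mulVec x) ⬝ᵥ w)) := by
                  rw [neg_dotProduct, smul_dotProduct]; rfl
              _ = 0 := by rw [dot_ker_of_symm hB hw, mul_zero, neg_zero]
          exact (mul_eq_zero.mp hsc).resolve_left hs
        rw [dotProduct_add, h1, h2, add_zero]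
      funext i
      simpa using hdot (Pi.single i 1)
    have hBx : B.mulVec x = 0 := by
      have : t • B.mulVec x = 0 := by simpa [hAx] using hx'
      simpa [ht] using this
    exact hker x hAx hBx
  have hinj' : Function.Injective M.mulVec := by
    have : LinearMap.ker M.mulVecLin = ⊥ := by
      rw [LinearMap.ker_eq_bot']
      exact fun x hx => hinj x hx
    exact LinearMap.ker_eq_bot.mp this
  have hunit : IsUnit M := mulVec_injective_iff_isUnit.mp hinj'
  exact ⟨hunit, by simpa using M.rank_of_isUnit hunit⟩
end

section
/- Let G₁ be the 11×11 integer symmetric Gram matrix of the lattice S̃_det in the basis (a₁,…,a₉,h,w), where a₁,…,a₁₀ are pairwise orthogonal vectors of square −2, h is orthogonal to all aᵢ with h·h = 4, and w = (a₁+⋯+a₁₀+h)/2; explicitly, for 1 ≤ i,j ≤ 9, the entries of G₁ are aᵢ·aⱼ = −2δᵢⱼ, aᵢ·h = 0, aᵢ·w = −1, h·h = 4, h·w = 2, w·w = −4. Let G₂ be the Gram matrix of U ⊕ E8(2) ⊕ [−4]. Then there exists an 11×11 integer matrix P with determinant ±1 such that Pᵀ G₁ P = G₂; that is, S̃_det is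 isometric to U ⊕ E8(2) ⊕ [−4]. -/
open Matrix

/-- Adjacency relation of the `E8` Dynkin diagram on vertices `0,…,7`:
a chain `0–1–2–3–4–5–6` with the extra vertex `7` attached to vertex `2`. -/
def e8Adj (a b : ℕ) : Prop :=
  (a, b) ∈ [(0,1),(1,0),(1,2),(2,1),(2,3),(3,2),(3,4),(4,3),
            (4,5),(5,4),(5,6),(6,5),(2,7),(7,2)]

instance (a b : ℕ) : Decidable (e8Adj a b) := by unfold e8Adj; infer_instance

/-- The Cartan matrix of `E8` (entries indexed by natural numbers `0,…,7`). -/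
def cartanE8 (a b : ℕ) : ℤ :=
  if a = b then 2 else if e8Adj a b then -1 else 0

/-- The bilinear form associated with an integral Gram matrix `G`. -/
def BG {k : ℕ} (G : Matrix (Fin k) (Fin k) ℤ) (x y : Fin k → ℤ) : ℤ :=
  x ⬝ᵥ G.mulVec y

/-- The Gram matrix `G₁` of the lattice `S̃_det` in the basis `(a₁,…,a₉,h,w)`, where the
`aᵢ` are pairwise orthogonal of square `−2`, `h ⊥ aᵢ`, `h·h = 4`, and
`w = (a₁+⋯+a₁₀+h)/2`. Indices `0,…,8` correspond to `a₁,…,a₉`, index `9` to `h`,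
index `10` to `w`. -/
def G1 : Matrix (Fin 11) (Fin 11) ℤ := Matrix.of fun i j =>
  if i.val < 9 then
    (if j.val < 9 then (if i = j then -2 else 0) else if j.val = 9 then 0 else -1)
  else if i.val = 9 then
    (if j.val < 9 then 0 else if j.val = 9 then 4 else 2)
  else
    (if j.val < 9 then -1 else if j.val = 9 then 2 else -4)

/-- The Gram matrix `G₂` of `U ⊕ E8(2) ⊕ [−4]`: indices `0,1` span a hyperbolic plane `U`,
indices `2,…,9` carry the Gram matrix `−2C` of `E8(2)`, and index `10` has square `−4`. -/
def G2 : Matrix (Fin 11) (Fin 11) ℤ := Matrix.of fun i j =>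
  if i.val < 2 then
    (if j.val < 2 then (if i = j then 0 else 1) else 0)
  else if i.val < 10 then
    (if 2 ≤ j.val ∧ j.val < 10 then -2 * cartanE8 (i.val - 2) (j.val - 2) else 0)
  else
    (if j.val = 10 then -4 else 0)

def Pmat : Matrix (Fin 11) (Fin 11) ℤ :=
  !![1, 1, -2, 0, 0, 0, 0, 0, 0, 1, -2;
     0, -1, 0, 1, 0, 0, 0, 0, -1, -1, 0;
     0, 0, -1, 0, 1, 0, 0, 0, -1, -1, 0;
     0, 0, -1, 1, -1, 1, 0, 0, -1, 0, 0;
     0, 0, -1, 1, 0, -1, 1, 0, -1, 0, 0;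
     0, 0, -1, 1, 0, 0, -1, 1, -1, 0, 0;
     0, 0, -1, 1, 0, 0, 0, -1, 0, 0, 0;
     0, 0, -1, 1, 0, 0, 0, 0, 0, -1, 0;
     0, 0, 0, 0, 0, 0, 0, 0, -1, 0, 0;
     1, 1, -2, 0, 0, 0, 0, 0, 0, 1, -1;
     1, 1, 0, -2, 0, 0, 0, 0, 2, 2, 0]
def Qmat : Matrix (Fin 11) (Fin 11) ℤ :=
  !![-3, 1, -1, -1, -1, -1, -1, -1, -1, 6, -2;
     -3, -1, -1, -1, -1, -1, -1, -1, -1, 6, -3;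
     -3, 0, -1, -1, -1, -1, -1, -2, -2, 6, -3;
     -4, 0, -1, -1, -1, -1, -1, -3, -4, 8, -4;
     -4, 0, 0, -1, -1, -1, -1, -4, -5, 8, -4;
     -3, 0, 0, 0, -1, -1, -1, -3, -4, 6, -3;
     -2, 0, 0, 0, 0, -1, -1, -2, -3, 4, -2;
     -1, 0, 0, 0, 0, 0, -1, -1, -2, 2, -1;
     0, 0, 0, 0, 0, 0, 0, 0, -1, 0, 0;
     -1, 0, 0, 0, 0, 0, 0, -2, -2, 2, -1;
     -1, 0, 0, 0, 0, 0, 0, 0, 0, 1, 0]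


lemma hPQ : Pmat * Qmat = 1 := by decide

lemma hGram : Pmatᵀ * G1 * Pmat = G2 := by decide

/-- The lattice `S̃_det` is isometric to `U ⊕ E8(2) ⊕ [−4]`: the Gram matrices `G₁` and `G₂`
are related by an integral base change of determinant `±1`. -/
theorem Sdet_isometric_U_E8two_minus4 :
    ∃ P : Matrix (Fin 11) (Fin 11) ℤ,
      (P.det = 1 ∨ P.det = -1) ∧ Pᵀ * G1 * P = G2 := by
  refine ⟨Pmat, ?_, hGram⟩
  have h : IsUnit Pmat.det := Matrix.isUnit_det_of_right_inverse hPQ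
  exact Int.isUnit_iff.mp h
end

section
/- In the lattice M = E8(2) ⊕ 2A1(−1) with the vector h = e₉ + e₁₀, there do not exist five vectors t₁,…,t₅ ∈ ℤ^10 such that B(tᵢ,tᵢ) = −4 for each i, B(tᵢ,tⱼ) = 0 for all i ≠ j, and t₁+⋯+t₅ − h ∈ 2ℤ^10. -/
open Matrix

/-- The Gram matrix of `M = E8(2) ⊕ 2A1(−1)`: indices `0,…,7` carry `−2C` (the lattice
`E8(2)`) and indices `8, 9` each have square `2`. -/
def GM : Matrix (Fin 10) (Fin 10) ℤ := Matrix.of fun i j =>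
  if i.val < 8 ∧ j.val < 8 then -2 * cartanE8 i.val j.val
  else if i = j then 2 else 0

/-- The vector `h = e₉ + e₁₀` of square `4`. -/
def hvec : Fin 10 → ℤ := Pi.single 8 1 + Pi.single 9 1
lemma sum10 (f : Fin 10 → ℤ) :
    ∑ i, f i = f 0 + f 1 + f 2 + f 3 + f 4 + f 5 + f 6 + f 7 + f 8 + f 9 := by
  rw [show (Finset.univ : Finset (Fin 10)) = {0,1,2,3,4,5,6,7,8,9} from by decide]
  simp (config := { decide := true }) [Finset.sum_insert, Finset.mem_insert]
  ring

lemma BG_expand (x y : Fin 10 → ℤ) :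
    BG GM x y =
      -4*(x 0*y 0 + x 1*y 1 + x 2*y 2 + x 3*y 3 + x 4*y 4 + x 5*y 5 + x 6*y 6 + x 7*y 7)
      + 2*(x 0*y 1 + x 1*y 0 + x 1*y 2 + x 2*y 1 + x 2*y 3 + x 3*y 2 + x 3*y 4 + x 4*y 3
          + x 4*y 5 + x 5*y 4 + x 5*y 6 + x 6*y 5 + x 2*y 7 + x 7*y 2)
      + 2*(x 8*y 8) + 2*(x 9*y 9) := by
  simp (config := { decide := true }) [BG, GM, cartanE8, e8Adj, dotProduct, Matrix.mulVec, sum10]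
  ring
lemma BG_add_left {k : ℕ} (G : Matrix (Fin k) (Fin k) ℤ) (x y z : Fin k → ℤ) :
    BG G (x + y) z = BG G x z + BG G y z := by
  simp [BG, add_dotProduct]

lemma BG_add_right {k : ℕ} (G : Matrix (Fin k) (Fin k) ℤ) (x y z : Fin k → ℤ) :
    BG G x (y + z) = BG G x y + BG G x z := by
  simp [BG, Matrix.mulVec_add, dotProduct_add]

lemma BG_sum (t : Fin 5 → Fin 10 → ℤ) :
    BG GM (∑ i, t i) (∑ i, t i) = ∑ i, ∑ j, BG GM (t i) (t j) := by
  simp only [Fin.sum_univ_five, BG_add_left, BG_add_right]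
  abel

/-- In the lattice `M = E8(2) ⊕ 2A1(−1)` there is no quintuple of pairwise orthogonal
vectors of square `−4` whose sum is congruent to `h = e₉ + e₁₀` modulo `2M`. -/
theorem no_orthogonal_quintuple :
    ¬ ∃ t : Fin 5 → (Fin 10 → ℤ),
        (∀ i, BG GM (t i) (t i) = -4) ∧
        (∀ i j, i ≠ j → BG GM (t i) (t j) = 0) ∧
        (∃ a : Fin 10 → ℤ, (∑ i, t i) - hvec = 2 • a) := by
  rintro ⟨t, hdiag, horth, a, hsum⟩
  have hS : (∑ i, t i) = hvec + (a + a) := by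
    have h := sub_eq_iff_eq_add.mp hsum
    rw [h, two_smul]; abel
  have h1 : BG GM (∑ i, t i) (∑ i, t i) = -20 := by
    rw [BG_sum]
    have hrow : ∀ i : Fin 5, ∑ j, BG GM (t i) (t j) = -4 := by
      intro i
      rw [Finset.sum_eq_single i (fun j _ hj => horth i j (Ne.symm hj)) (by simp)]
      exact hdiag i
    simp [hrow]
  rw [hS, BG_expand] at h1
  simp (config := { decide := true }) only [Pi.add_apply, hvec, Pi.single_apply] at h1
  norm_num at h1
  obtain ⟨k1, hk1⟩ := Int.even_mul_succ_self (a 8)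
  obtain ⟨k2, hk2⟩ := Int.even_mul_succ_self (a 9)
  have hfin : 16*k1 + 16*k2 +
      16*((a 0*a 1 + a 1*a 2 + a 2*a 3 + a 3*a 4 + a 4*a 5 + a 5*a 6 + a 2*a 7)
        - (a 0^2 + a 1^2 + a 2^2 + a 3^2 + a 4^2 + a 5^2 + a 6^2 + a 7^2)) = -24 := by
    linear_combination h1 - 8*hk1 - 8*hk2
  set m := (a 0*a 1 + a 1*a 2 + a 2*a 3 + a 3*a 4 + a 4*a 5 + a 5*a 6 + a 2*a 7)
      - (a 0^2 + a 1^2 + a 2^2 + a 3^2 + a 4^2 + a 5^2 + a 6^2 + a 7^2) with hm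
  omega
end
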